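/- For all n ≥ 1, the total number of 1-ascents in all dispersed Dyck paths of length n+2 is A(n+2) = 2^(n−1) + ((n+1)/2)·C(n, ⌊n/2⌋). -/

import Mathlib

inductive DStep | up | down | right
deriving DecidableEq, Repr

instance : Fintype DStep := ⟨{.up, .down, .right}, fun x => by cases x <;> simp⟩

/-- Run a dispersed Dyck path from height `h`; `none` if an illegal step occurs,
otherwise the final height. Down steps require positive height; right steps require height 0. -/
def DStep.run : ℕ → List DStep → Option ℕ
  | h, [] => some h
  | h, .up :: l => DStep.run (h + 1) l
  | h + 1, .down :: l => DStep.run h l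
  | 0, .down :: _ => none
  | 0, .right :: l => DStep.run 0 l
  | _ + 1, .right :: _ => none

/-- A dispersed Dyck path: starts and ends at height 0, all steps legal. -/
def IsDDP (l : List DStep) : Prop := DStep.run 0 l = some 0

instance : DecidablePred IsDDP := fun l => by unfold IsDDP; infer_instance

/-- The finset of all dispersed Dyck paths of length `n`. -/
def DDPs (n : ℕ) : Finset (List.Vector DStep n) :=
  Finset.univ.filter (fun v => IsDDP v.toList)

/-- Number of dispersed Dyck paths of length `n`. -/
def dD (n : ℕ) : ℕ := (DDPs n).card

/-- Total number of up steps over all DDPs of length `n`. -/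
def U (n : ℕ) : ℕ := ∑ v ∈ DDPs n, v.toList.count DStep.up

/-- Total number of down steps over all DDPs of length `n`. -/
def D (n : ℕ) : ℕ := ∑ v ∈ DDPs n, v.toList.count DStep.down

/-- Total number of right steps over all DDPs of length `n`. -/
def R (n : ℕ) : ℕ := ∑ v ∈ DDPs n, v.toList.count DStep.right

/-- `i` is the position of a 1-ascent in `l`: an up step with no adjacent up step. -/
def IsOneAscentAt (l : List DStep) (i : ℕ) : Prop :=
  l[i]? = some .up ∧ l[i + 1]? ≠ some .up ∧ (i = 0 ∨ l[i - 1]? ≠ some .up)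

instance (l : List DStep) : DecidablePred (IsOneAscentAt l) := fun i => by
  unfold IsOneAscentAt; infer_instance

/-- Number of 1-ascents in `l`. -/
def oneAsc (l : List DStep) : ℕ :=
  ((Finset.range l.length).filter (IsOneAscentAt l)).card

/-- Total number of 1-ascents over all DDPs of length `n`. -/
def A (n : ℕ) : ℕ := ∑ v ∈ DDPs n, oneAsc v.toList

/-- Signed final height of a plain path (ignoring any right steps). -/
def psum : List DStep → ℤ
  | [] => 0
  | .up :: l => 1 + psum l
  | .down :: l => -1 + psum l
  | .right :: l => psum l



section OneAscAux
open Finset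

/-- counting with left-context `b` = "previous step was an up". -/
def AuxP (b : Bool) (l : List DStep) (i : ℕ) : Prop :=
  l[i]? = some .up ∧ l[i + 1]? ≠ some .up ∧
    (if i = 0 then b = false else l[i - 1]? ≠ some .up)

instance (b : Bool) (l : List DStep) : DecidablePred (AuxP b l) := fun i => by
  unfold AuxP; infer_instance

def oneAscB (b : Bool) (l : List DStep) : ℕ :=
  ((Finset.range l.length).filter (AuxP b l)).card

lemma oneAsc_eq_oneAscB (l : List DStep) : oneAsc l = oneAscB false l := by
  unfold oneAsc oneAscB
  congr 1
  apply Finset.filter_congr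
  intro i _
  unfold IsOneAscentAt AuxP
  rcases Nat.eq_zero_or_pos i with h | h
  · subst h
    simp only [if_pos rfl]
    tauto
  · have hi : i ≠ 0 := h.ne'
    simp only [if_neg hi]
    tauto

lemma AuxP_succ (b : Bool) (s : DStep) (l : List DStep) (i : ℕ) :
    AuxP b (s :: l) (i + 1) ↔ AuxP (decide (s = .up)) l i := by
  unfold AuxP
  cases i with
  | zero =>
      simp only [List.getElem?_cons_succ, if_neg (Nat.succ_ne_zero 0), if_pos rfl,
        Nat.add_sub_cancel, List.getElem?_cons_zero]
      constructor
      · rintro ⟨h1, h2, h3⟩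
        refine ⟨h1, h2, ?_⟩
        simp only [decide_eq_false_iff_not]
        intro hs; exact h3 (by rw [hs])
      · rintro ⟨h1, h2, h3⟩
        refine ⟨h1, h2, ?_⟩
        simp only [decide_eq_false_iff_not] at h3
        intro hc; exact h3 (by injection hc)
  | succ j =>
      simp only [List.getElem?_cons_succ, if_neg (Nat.succ_ne_zero (j+1)),
        if_neg (Nat.succ_ne_zero j), Nat.succ_sub_one, Nat.add_sub_cancel]

lemma oneAscB_nil (b : Bool) : oneAscB b [] = 0 := by
  simp [oneAscB]

lemma AuxP_zero (b : Bool) (s : DStep) (l : List DStep) :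
    AuxP b (s :: l) 0 ↔ (s = .up ∧ b = false ∧ l[0]? ≠ some .up) := by
  unfold AuxP
  simp only [List.getElem?_cons_zero, List.getElem?_cons_succ, if_pos rfl, Option.some.injEq]
  tauto

lemma oneAscB_cons (b : Bool) (s : DStep) (l : List DStep) :
    oneAscB b (s :: l) =
      (if s = .up ∧ b = false ∧ l[0]? ≠ some .up then 1 else 0) +
        oneAscB (decide (s = .up)) l := by
  unfold oneAscB
  rw [Finset.card_filter, Finset.card_filter]
  simp only [List.length_cons]
  rw [Finset.sum_range_succ' (fun i => if AuxP b (s :: l) i then 1 else 0) l.length,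
    add_comm]
  congr 1
  · simp only [AuxP_zero]
  · apply Finset.sum_congr rfl
    intro i _
    simp only [AuxP_succ]

def gasc : ℕ → List DStep → ℕ
  | c, [] => if c = 1 then 1 else 0
  | c, .up :: l => gasc (min (c + 1) 2) l
  | c, .down :: l => (if c = 1 then 1 else 0) + gasc 0 l
  | c, .right :: l => (if c = 1 then 1 else 0) + gasc 0 l

lemma gasc_eq (c : ℕ) (l : List DStep) :
    gasc c l = (if c = 1 ∧ l[0]? ≠ some .up then 1 else 0) + oneAscB (decide (c ≠ 0)) l := by
  induction l generalizing c with
  | nil =>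
      rw [oneAscB_nil]
      show (if c = 1 then 1 else 0) = _
      simp
  | cons s t ih =>
      have ht : gasc 0 t = oneAscB false t := by rw [ih]; simp
      cases s with
      | up =>
          show gasc (min (c + 1) 2) t = _
          rw [ih, oneAscB_cons]
          by_cases hc : c = 0
          · subst hc
            norm_num
          · have h1 : min (c + 1) 2 = 2 := by omega
            have e1 : (decide (c ≠ 0)) = true := by simp [hc]
            rw [h1, e1]
            simp
      | down =>
          show (if c = 1 then 1 else 0) + gasc 0 t = _
          rw [ht, oneAscB_cons]
          by_cases hc : c = 1
          · subst hc
            simp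
          · simp [hc]
      | right =>
          show (if c = 1 then 1 else 0) + gasc 0 t = _
          rw [ht, oneAscB_cons]
          by_cases hc : c = 1
          · subst hc
            simp
          · simp [hc]

lemma oneAsc_eq_gasc (l : List DStep) : oneAsc l = gasc 0 l := by
  rw [oneAsc_eq_oneAscB, gasc_eq]
  simp

def consE (m : ℕ) : DStep × List.Vector DStep m ≃ List.Vector DStep (m + 1) where
  toFun p := p.1 ::ᵥ p.2
  invFun v := (v.head, v.tail)
  left_inv := fun ⟨s, w⟩ => by simp
  right_inv := fun v => v.cons_head_tail

def vsum (f : List DStep → ℕ) (h m : ℕ) : ℕ :=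
  ∑ v : List.Vector DStep m, if DStep.run h v.toList = some 0 then f v.toList else 0

lemma vsum_zero (f : List DStep → ℕ) (h : ℕ) :
    vsum f h 0 = if h = 0 then f [] else 0 := by
  unfold vsum
  have : ∀ v : List.Vector DStep 0, v = List.Vector.nil := fun v => v.eq_nil
  rw [Finset.sum_eq_single List.Vector.nil]
  · show (if DStep.run h [] = some 0 then f [] else 0) = _
    rw [show DStep.run h [] = some h from by simp [DStep.run]]
    by_cases hh : h = 0 <;> simp [hh]
  · intro v _ hv; exact absurd (this v) hv
  · intro hv; exact absurd (Finset.mem_univ _) hv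

lemma vsum_succ (f : List DStep → ℕ) (h m : ℕ) :
    vsum f h (m + 1) = ∑ s : DStep, ∑ v : List.Vector DStep m,
      if DStep.run h (s :: v.toList) = some 0 then f (s :: v.toList) else 0 := by
  have e1 : vsum f h (m + 1) = ∑ p : DStep × List.Vector DStep m,
      (if DStep.run h ((consE m) p).toList = some 0 then f ((consE m) p).toList else 0) :=
    (Fintype.sum_equiv (consE m) _ _ (fun p => rfl)).symm
  rw [e1, Fintype.sum_prod_type]
  apply Finset.sum_congr rfl
  intro s _
  apply Finset.sum_congr rfl
  intro v _
  simp [consE]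

lemma sum_dstep (F : DStep → ℕ) :
    ∑ s : DStep, F s = F .up + F .down + F .right := by
  rw [show (Finset.univ : Finset DStep) = {DStep.up, DStep.down, DStep.right} from by decide]
  rw [Finset.sum_insert (by decide), Finset.sum_insert (by decide), Finset.sum_singleton]
  ring

lemma run_up (h : ℕ) (l : List DStep) : DStep.run h (.up :: l) = DStep.run (h+1) l := by simp [DStep.run]
lemma run_down (h : ℕ) (l : List DStep) : DStep.run (h+1) (.down :: l) = DStep.run h l := by simp [DStep.run]
lemma run_down0 (l : List DStep) : DStep.run 0 (.down :: l) = none := by simp [DStep.run]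
lemma run_right0 (l : List DStep) : DStep.run 0 (.right :: l) = DStep.run 0 l := by simp [DStep.run]
lemma run_right (h : ℕ) (l : List DStep) : DStep.run (h+1) (.right :: l) = none := by simp [DStep.run]

/-- sum of an if-distributed pair -/
lemma ite_add_zero' (P : Prop) [Decidable P] (a b : ℕ) :
    (if P then a + b else 0) = (if P then a else 0) + (if P then b else 0) := by
  split <;> simp

def Ncnt (h m : ℕ) : ℕ := vsum (fun _ => 1) h m

lemma Ncnt_zero (h : ℕ) : Ncnt h 0 = if h = 0 then 1 else 0 := vsum_zero _ h

lemma Ncnt_succ0 (m : ℕ) : Ncnt 0 (m + 1) = Ncnt 1 m + Ncnt 0 m := by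
  unfold Ncnt
  rw [vsum_succ, sum_dstep]
  simp only [run_up, run_down0, run_right0]
  simp [vsum]

lemma Ncnt_succ (h m : ℕ) : Ncnt (h + 1) (m + 1) = Ncnt (h + 2) m + Ncnt h m := by
  unfold Ncnt
  rw [vsum_succ, sum_dstep]
  simp only [run_up, run_down, run_right]
  simp [vsum]

-- gasc step evaluations
lemma gasc_up (c : ℕ) (l : List DStep) : gasc c (.up :: l) = gasc (min (c+1) 2) l := rfl
lemma gasc_down (c : ℕ) (l : List DStep) :
    gasc c (.down :: l) = (if c = 1 then 1 else 0) + gasc 0 l := rfl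
lemma gasc_right (c : ℕ) (l : List DStep) :
    gasc c (.right :: l) = (if c = 1 then 1 else 0) + gasc 0 l := rfl

lemma W_succ0 (c m : ℕ) :
    vsum (gasc c) 0 (m + 1) =
      vsum (gasc (min (c+1) 2)) 1 m +
        ((if c = 1 then 1 else 0) * Ncnt 0 m + vsum (gasc 0) 0 m) := by
  rw [vsum_succ, sum_dstep]
  simp only [run_up, run_down0, run_right0, gasc_up, gasc_down, gasc_right]
  have h2 : ∀ v : List.Vector DStep m,
      (if DStep.run 0 v.toList = some 0 then (if c = 1 then 1 else 0) + gasc 0 v.toList else 0)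
      = (if c = 1 then 1 else 0) * (if DStep.run 0 v.toList = some 0 then 1 else 0)
        + (if DStep.run 0 v.toList = some 0 then gasc 0 v.toList else 0) := by
    intro v; split <;> simp
  simp only [if_neg (by simp : ¬ (none : Option ℕ) = some 0)]
  rw [Finset.sum_congr rfl (fun v _ => h2 v), Finset.sum_add_distrib, ← Finset.mul_sum]
  simp [vsum, Ncnt]

lemma W_succ (c h m : ℕ) :
    vsum (gasc c) (h + 1) (m + 1) =
      vsum (gasc (min (c+1) 2)) (h + 2) m +
        ((if c = 1 then 1 else 0) * Ncnt h m + vsum (gasc 0) h m) := by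
  rw [vsum_succ, sum_dstep]
  simp only [run_up, run_down, run_right, gasc_up, gasc_down, gasc_right]
  have h2 : ∀ v : List.Vector DStep m,
      (if DStep.run h v.toList = some 0 then (if c = 1 then 1 else 0) + gasc 0 v.toList else 0)
      = (if c = 1 then 1 else 0) * (if DStep.run h v.toList = some 0 then 1 else 0)
        + (if DStep.run h v.toList = some 0 then gasc 0 v.toList else 0) := by
    intro v; split <;> simp
  simp only [if_neg (by simp : ¬ (none : Option ℕ) = some 0)]
  rw [Finset.sum_congr rfl (fun v _ => h2 v), Finset.sum_add_distrib, ← Finset.mul_sum]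
  simp [vsum, Ncnt]

def Nf (h m : ℕ) : ℕ := m.choose ((m + h + 1) / 2)

def Sf (N T : ℕ) : ℕ := ∑ t ∈ Finset.range (T + 1), N.choose t

def Xf (h m : ℕ) : ℕ :=
  if h + 2 ≤ m then
    ((m - 2 - h) / 2 + 1) * (m - 2).choose ((m - 2 - h) / 2 + 1) + Sf (m - 2) ((m - 2 - h) / 2)
  else 0

def Mf (h m : ℕ) : ℕ :=
  match m, h with
  | 0, 0 => 1
  | 0, _ + 1 => 0
  | m + 1, 0 => Nf 0 m
  | m + 1, h + 1 => Nf h m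

def P1f (h m : ℕ) : ℕ :=
  match m with
  | 0 => 0
  | m + 1 => Mf (h + 1) m

lemma Xf_eval (h T e : ℕ) (he : e ≤ 1) :
    Xf h (h + 2 + 2 * T + e) =
      (T + 1) * (h + 2 * T + e).choose (T + 1) + Sf (h + 2 * T + e) T := by
  unfold Xf
  rw [if_pos (by omega)]
  have d1 : h + 2 + 2 * T + e - 2 - h = 2 * T + e := by omega
  have d2 : h + 2 + 2 * T + e - 2 = h + 2 * T + e := by omega
  have d3 : (2 * T + e) / 2 = T := by omega
  rw [d1, d2, d3]

lemma Xf_zero_of_lt (h m : ℕ) (hm : m < h + 2) : Xf h m = 0 := by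
  unfold Xf
  rw [if_neg (by omega)]

lemma P1f_eval (x m : ℕ) (hm : 2 ≤ m) : P1f x m = Nf x (m - 2) := by
  obtain ⟨k, rfl⟩ : ∃ k, m = k + 2 := ⟨m - 2, by omega⟩
  show Mf (x + 1) (k + 1) = Nf x (k + 2 - 2)
  simp [Mf]

lemma P1f_one (x : ℕ) : P1f x 1 = 0 := by
  show Mf (x + 1) 0 = 0
  simp [Mf]

lemma Mf_eval (x m : ℕ) (hm : 1 ≤ m) : Mf (x + 1) m = Nf x (m - 1) := by
  obtain ⟨k, rfl⟩ : ∃ k, m = k + 1 := ⟨m - 1, by omega⟩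
  simp [Mf]

lemma Nf_A0 (m : ℕ) : Nf 0 (m + 1) = Nf 1 m + Nf 0 m := by
  unfold Nf
  simp only [Nat.add_zero]
  rcases Nat.even_or_odd m with ⟨r, rfl⟩ | ⟨r, rfl⟩
  · have d1 : (r + r + 1 + 1) / 2 = r + 1 := by omega
    have d2 : (r + r + 1) / 2 = r := by omega
    rw [d1, d2]
    have p := Nat.choose_succ_succ' (r + r) r
    omega
  · have d1 : (2 * r + 1 + 1 + 1) / 2 = r + 1 := by omega
    have d2 : (2 * r + 1 + 1) / 2 = r + 1 := by omega
    rw [d1, d2]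
    have p := Nat.choose_succ_succ' (2 * r + 1) r
    have symm : (2 * r + 1).choose (2 * r + 1 - (r + 1)) = (2 * r + 1).choose (r + 1) :=
      Nat.choose_symm (by omega)
    have d3 : 2 * r + 1 - (r + 1) = r := by omega
    rw [d3] at symm
    have : 2 * r + 1 + 1 = (2 * r + 1) + 1 := rfl
    rw [this, Nat.choose_succ_succ' (2 * r + 1) r]
    omega

lemma Nf_Ah (h m : ℕ) : Nf (h + 1) (m + 1) = Nf (h + 2) m + Nf h m := by
  unfold Nf
  have d1 : (m + 1 + (h + 1) + 1) / 2 = (m + h + 1) / 2 + 1 := by omega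
  have d2 : (m + (h + 2) + 1) / 2 = (m + h + 1) / 2 + 1 := by omega
  rw [d1, d2, Nat.choose_succ_succ' m ((m + h + 1) / 2)]
  omega

lemma Sf_succ_succ (N T : ℕ) : Sf (N + 1) (T + 1) = Sf N (T + 1) + Sf N T := by
  induction T with
  | zero =>
      simp [Sf, Finset.sum_range_succ, Nat.choose_one_right]
      omega
  | succ T ih =>
      have e1 : Sf (N + 1) (T + 1 + 1) = Sf (N + 1) (T + 1) + (N + 1).choose (T + 2) :=
        Finset.sum_range_succ _ _
      have e2 : Sf N (T + 1 + 1) = Sf N (T + 1) + N.choose (T + 2) :=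
        Finset.sum_range_succ _ _
      have e3 : Sf N (T + 1) = Sf N T + N.choose (T + 1) :=
        Finset.sum_range_succ _ _
      have p : (N + 1).choose (T + 2) = N.choose (T + 1) + N.choose (T + 2) :=
        Nat.choose_succ_succ N (T + 1)
      omega

lemma Sf_zero (N : ℕ) : Sf N 0 = 1 := by simp [Sf]

lemma B0_even (T : ℕ) :
    Xf 0 (2 * T + 3) + P1f 1 (2 * T + 2)
      = Xf 0 (2 * T + 2) + Xf 1 (2 * T + 2) + Mf 1 (2 * T + 2) := by
  have E1 : Xf 0 (2 * T + 3) = (T + 1) * (2 * T + 1).choose (T + 1) + Sf (2 * T + 1) T := by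
    rw [show 2 * T + 3 = 0 + 2 + 2 * T + 1 from by ring, Xf_eval 0 T 1 (by norm_num)]
    rw [show 0 + 2 * T + 1 = 2 * T + 1 from by ring]
  have E2 : P1f 1 (2 * T + 2) = (2 * T).choose (T + 1) := by
    rw [P1f_eval 1 (2 * T + 2) (by omega)]
    rw [show 2 * T + 2 - 2 = 2 * T from by omega]
    unfold Nf
    rw [show (2 * T + 1 + 1) / 2 = T + 1 from by omega]
  have E3 : Xf 0 (2 * T + 2) = (T + 1) * (2 * T).choose (T + 1) + Sf (2 * T) T := by
    rw [show 2 * T + 2 = 0 + 2 + 2 * T + 0 from by ring, Xf_eval 0 T 0 (by norm_num)]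
    rw [show 0 + 2 * T + 0 = 2 * T from by ring]
  have E4 : Mf 1 (2 * T + 2) = (2 * T + 1).choose (T + 1) := by
    rw [Mf_eval 0 (2 * T + 2) (by omega)]
    rw [show 2 * T + 2 - 1 = 2 * T + 1 from by omega]
    unfold Nf
    rw [show (2 * T + 1 + 0 + 1) / 2 = T + 1 from by omega]
  rw [E1, E2, E3, E4]
  cases T with
  | zero =>
      rw [Xf_zero_of_lt 1 2 (by omega)]
      norm_num [Sf_zero]
  | succ T0 =>
      have E5 : Xf 1 (2 * (T0 + 1) + 2)
          = (T0 + 1) * (2 * (T0 + 1)).choose (T0 + 1) + Sf (2 * (T0 + 1)) T0 := by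
        rw [show 2 * (T0 + 1) + 2 = 1 + 2 + 2 * T0 + 1 from by ring, Xf_eval 1 T0 1 (by norm_num)]
        rw [show 1 + 2 * T0 + 1 = 2 * (T0 + 1) from by ring]
      rw [E5]
      have p1 : (2 * (T0 + 1) + 1).choose (T0 + 1 + 1)
          = (2 * (T0 + 1)).choose (T0 + 1) + (2 * (T0 + 1)).choose (T0 + 1 + 1) :=
        Nat.choose_succ_succ' (2 * (T0 + 1)) (T0 + 1)
      have s1 : Sf (2 * (T0 + 1) + 1) (T0 + 1)
          = Sf (2 * (T0 + 1)) (T0 + 1) + Sf (2 * (T0 + 1)) T0 :=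
        Sf_succ_succ (2 * (T0 + 1)) T0
      rw [p1, s1]
      have s2 : Sf (2 * (T0 + 1)) (T0 + 1)
          = Sf (2 * (T0 + 1)) T0 + (2 * (T0 + 1)).choose (T0 + 1) :=
        Finset.sum_range_succ _ _
      rw [s2]
      ring

lemma B0_odd (T : ℕ) :
    Xf 0 (2 * T + 4) + P1f 1 (2 * T + 3)
      = Xf 0 (2 * T + 3) + Xf 1 (2 * T + 3) + Mf 1 (2 * T + 3) := by
  have E1 : Xf 0 (2 * T + 4) = (T + 2) * (2 * T + 2).choose (T + 2) + Sf (2 * T + 2) (T + 1) := by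
    rw [show 2 * T + 4 = 0 + 2 + 2 * (T + 1) + 0 from by ring, Xf_eval 0 (T + 1) 0 (by norm_num)]
    rw [show 0 + 2 * (T + 1) + 0 = 2 * T + 2 from by ring]
  have E2 : P1f 1 (2 * T + 3) = (2 * T + 1).choose (T + 1) := by
    rw [P1f_eval 1 (2 * T + 3) (by omega)]
    rw [show 2 * T + 3 - 2 = 2 * T + 1 from by omega]
    unfold Nf
    rw [show (2 * T + 1 + 1 + 1) / 2 = T + 1 from by omega]
  have E3 : Xf 0 (2 * T + 3) = (T + 1) * (2 * T + 1).choose (T + 1) + Sf (2 * T + 1) T := by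
    rw [show 2 * T + 3 = 0 + 2 + 2 * T + 1 from by ring, Xf_eval 0 T 1 (by norm_num)]
    rw [show 0 + 2 * T + 1 = 2 * T + 1 from by ring]
  have E5 : Xf 1 (2 * T + 3) = (T + 1) * (2 * T + 1).choose (T + 1) + Sf (2 * T + 1) T := by
    rw [show 2 * T + 3 = 1 + 2 + 2 * T + 0 from by ring, Xf_eval 1 T 0 (by norm_num)]
    rw [show 1 + 2 * T + 0 = 2 * T + 1 from by ring]
  have E4 : Mf 1 (2 * T + 3) = (2 * T + 2).choose (T + 1) := by
    rw [Mf_eval 0 (2 * T + 3) (by omega)]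
    rw [show 2 * T + 3 - 1 = 2 * T + 2 from by omega]
    unfold Nf
    rw [show (2 * T + 2 + 0 + 1) / 2 = T + 1 from by omega]
  rw [E1, E2, E3, E4, E5]
  have p1 : (2 * T + 2).choose (T + 2)
      = (2 * T + 1).choose (T + 1) + (2 * T + 1).choose (T + 2) := by
    rw [show 2 * T + 2 = (2 * T + 1) + 1 from by ring]
    exact Nat.choose_succ_succ' (2 * T + 1) (T + 1)
  have p2 : (2 * T + 2).choose (T + 1)
      = (2 * T + 1).choose T + (2 * T + 1).choose (T + 1) := by
    rw [show 2 * T + 2 = (2 * T + 1) + 1 from by ring]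
    exact Nat.choose_succ_succ' (2 * T + 1) T
  have csym : (2 * T + 1).choose T = (2 * T + 1).choose (T + 1) := by
    have := Nat.choose_symm (show T + 1 ≤ 2 * T + 1 by omega)
    rw [show 2 * T + 1 - (T + 1) = T from by omega] at this
    exact this
  have s1 : Sf (2 * T + 2) (T + 1) = Sf (2 * T + 1) (T + 1) + Sf (2 * T + 1) T := by
    rw [show 2 * T + 2 = (2 * T + 1) + 1 from by ring]
    exact Sf_succ_succ (2 * T + 1) T
  have s2 : Sf (2 * T + 1) (T + 1) = Sf (2 * T + 1) T + (2 * T + 1).choose (T + 1) :=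
    Finset.sum_range_succ _ _
  have hkey : (2 * T + 1).choose (T + 2) * (T + 2) = (2 * T + 1).choose (T + 1) * T := by
    have := Nat.choose_succ_right_eq (2 * T + 1) (T + 1)
    rw [show 2 * T + 1 - (T + 1) = T from by omega] at this
    exact this
  rw [p1, p2, csym, s1, s2]
  have expand : (T + 2) * ((2 * T + 1).choose (T + 1) + (2 * T + 1).choose (T + 2))
      = (T + 2) * (2 * T + 1).choose (T + 1) + (2 * T + 1).choose (T + 2) * (T + 2) := by
    ring
  rw [expand, hkey]
  ring

lemma B0_all (m : ℕ) :
    Xf 0 (m + 1) + P1f 1 m = Xf 0 m + Xf 1 m + Mf 1 m := by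
  match m with
  | 0 =>
      rw [Xf_zero_of_lt 0 1 (by omega), Xf_zero_of_lt 0 0 (by omega),
        Xf_zero_of_lt 1 0 (by omega)]
      simp [P1f, Mf]
  | 1 =>
      rw [Xf_zero_of_lt 0 1 (by omega), Xf_zero_of_lt 1 1 (by omega)]
      rw [show (1 : ℕ) + 1 = 0 + 2 + 2 * 0 + 0 from by norm_num, Xf_eval 0 0 0 (by norm_num)]
      norm_num [Sf_zero, P1f_one]
      show _ = Mf (0 + 1) 1
      rw [Mf_eval 0 1 (by omega)]
      norm_num [Nf]
  | (m + 2) =>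
      rcases Nat.even_or_odd m with ⟨T, rfl⟩ | ⟨T, rfl⟩
      · rw [show T + T + 2 + 1 = 2 * T + 3 from by ring, show T + T + 2 = 2 * T + 2 from by ring]
        exact B0_even T
      · rw [show 2 * T + 1 + 2 + 1 = 2 * T + 4 from by ring,
          show 2 * T + 1 + 2 = 2 * T + 3 from by ring]
        exact B0_odd T

lemma Bh_core (h T e : ℕ) (he : e ≤ 1) :
    Xf (h + 1) (h + 2 + 2 * T + e + 1) + P1f (h + 2) (h + 2 + 2 * T + e)
      = Xf h (h + 2 + 2 * T + e) + Xf (h + 2) (h + 2 + 2 * T + e)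
        + Mf (h + 2) (h + 2 + 2 * T + e) := by
  have E1 : Xf (h + 1) (h + 2 + 2 * T + e + 1)
      = (T + 1) * (h + 2 * T + e + 1).choose (T + 1) + Sf (h + 2 * T + e + 1) T := by
    rw [show h + 2 + 2 * T + e + 1 = (h + 1) + 2 + 2 * T + e from by ring, Xf_eval (h + 1) T e he]
    rw [show h + 1 + 2 * T + e = h + 2 * T + e + 1 from by ring]
  have E2 : P1f (h + 2) (h + 2 + 2 * T + e) = (h + 2 * T + e).choose (h + T + 1 + e) := by
    rw [P1f_eval (h + 2) (h + 2 + 2 * T + e) (by omega)]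
    rw [show h + 2 + 2 * T + e - 2 = h + 2 * T + e from by omega]
    unfold Nf
    rw [show (h + 2 * T + e + (h + 2) + 1) / 2 = h + T + 1 + e from by omega]
  have E3 : Xf h (h + 2 + 2 * T + e)
      = (T + 1) * (h + 2 * T + e).choose (T + 1) + Sf (h + 2 * T + e) T :=
    Xf_eval h T e he
  have E4 : Mf (h + 2) (h + 2 + 2 * T + e) = (h + 2 * T + e + 1).choose (h + T + 1 + e) := by
    rw [Mf_eval (h + 1) (h + 2 + 2 * T + e) (by omega)]
    rw [show h + 2 + 2 * T + e - 1 = h + 2 * T + e + 1 from by omega]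
    unfold Nf
    rw [show (h + 2 * T + e + 1 + (h + 1) + 1) / 2 = h + T + 1 + e from by omega]
  rw [E1, E2, E3, E4]
  cases T with
  | zero =>
      rw [Xf_zero_of_lt (h + 2) (h + 2 + 2 * 0 + e) (by omega)]
      have z1 : (h + 2 * 0 + e).choose (h + 0 + 1 + e) = 0 :=
        Nat.choose_eq_zero_of_lt (by omega)
      have z2 : (h + 2 * 0 + e + 1).choose (h + 0 + 1 + e) = 1 := by
        rw [show h + 2 * 0 + e + 1 = h + 0 + 1 + e from by ring]
        exact Nat.choose_self _
      rw [z1, z2]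
      rw [Nat.choose_one_right, Nat.choose_one_right, Sf_zero, Sf_zero]
      ring
  | succ T0 =>
      have E5 : Xf (h + 2) (h + 2 + 2 * (T0 + 1) + e)
          = (T0 + 1) * (h + 2 * (T0 + 1) + e).choose (T0 + 1) + Sf (h + 2 * (T0 + 1) + e) T0 := by
        rw [show h + 2 + 2 * (T0 + 1) + e = (h + 2) + 2 + 2 * T0 + e from by ring,
          Xf_eval (h + 2) T0 e he]
        rw [show h + 2 + 2 * T0 + e = h + 2 * (T0 + 1) + e from by ring]
      rw [E5]
      have s1 : (h + 2 * (T0 + 1) + e).choose (h + (T0 + 1) + 1 + e)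
          = (h + 2 * (T0 + 1) + e).choose T0 := by
        have := Nat.choose_symm (show h + (T0 + 1) + 1 + e ≤ h + 2 * (T0 + 1) + e by omega)
        rw [show h + 2 * (T0 + 1) + e - (h + (T0 + 1) + 1 + e) = T0 from by omega] at this
        exact this.symm
      have s2 : (h + 2 * (T0 + 1) + e + 1).choose (h + (T0 + 1) + 1 + e)
          = (h + 2 * (T0 + 1) + e + 1).choose (T0 + 1) := by
        have := Nat.choose_symm (show h + (T0 + 1) + 1 + e ≤ h + 2 * (T0 + 1) + e + 1 by omega)
        rw [show h + 2 * (T0 + 1) + e + 1 - (h + (T0 + 1) + 1 + e) = T0 + 1 from by omega] at this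
        exact this.symm
      rw [s1, s2]
      have p1 : (h + 2 * (T0 + 1) + e + 1).choose (T0 + 1 + 1)
          = (h + 2 * (T0 + 1) + e).choose (T0 + 1) + (h + 2 * (T0 + 1) + e).choose (T0 + 1 + 1) :=
        Nat.choose_succ_succ' _ _
      have p2 : (h + 2 * (T0 + 1) + e + 1).choose (T0 + 1)
          = (h + 2 * (T0 + 1) + e).choose T0 + (h + 2 * (T0 + 1) + e).choose (T0 + 1) :=
        Nat.choose_succ_succ' _ _
      have s3 : Sf (h + 2 * (T0 + 1) + e + 1) (T0 + 1)
          = Sf (h + 2 * (T0 + 1) + e) (T0 + 1) + Sf (h + 2 * (T0 + 1) + e) T0 :=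
        Sf_succ_succ _ _
      rw [p1, p2, s3]
      ring

lemma Bh_all (h m : ℕ) :
    Xf (h + 1) (m + 1) + P1f (h + 2) m = Xf h m + Xf (h + 2) m + Mf (h + 2) m := by
  by_cases hm : h + 2 ≤ m
  · obtain ⟨T, e, he, rfl⟩ : ∃ T e, e ≤ 1 ∧ m = h + 2 + 2 * T + e :=
      ⟨(m - h - 2) / 2, (m - h - 2) % 2, by omega, by omega⟩
    exact Bh_core h T e he
  · rw [Xf_zero_of_lt h m (by omega), Xf_zero_of_lt (h + 2) m (by omega),
      Xf_zero_of_lt (h + 1) (m + 1) (by omega)]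
    match m, hm with
    | 0, _ => simp [P1f, Mf]
    | 1, _ =>
        rw [P1f_one]
        show 0 + 0 = 0 + 0 + Mf (h + 1 + 1) 1
        rw [Mf_eval (h + 1) 1 (by omega)]
        unfold Nf
        simp only [Nat.zero_add, Nat.add_zero]
        rw [Nat.choose_eq_zero_of_lt (show 0 < (0 + (h + 1) + 1) / 2 by omega)]
    | (k + 2), hm =>
        rw [P1f_eval (h + 2) (k + 2) (by omega), Mf_eval (h + 1) (k + 2) (by omega)]
        rw [show k + 2 - 2 = k from by omega, show k + 2 - 1 = k + 1 from by omega]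
        unfold Nf
        rw [Nat.choose_eq_zero_of_lt (show k < (k + (h + 2) + 1) / 2 by omega),
          Nat.choose_eq_zero_of_lt (show k + 1 < (k + 1 + (h + 1) + 1) / 2 by omega)]

lemma grand (m : ℕ) :
    (∀ h, Ncnt h m = Nf h m) ∧
    (∀ h, vsum (gasc 0) h m = Xf h m) ∧
    (∀ h, vsum (gasc 1) h m + P1f h m = Xf h m + Mf h m) ∧
    (∀ h, vsum (gasc 2) h m + P1f h m = Xf h m) := by
  induction m with
  | zero =>
      refine ⟨?_, ?_, ?_, ?_⟩ <;> intro h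
      · rw [Ncnt_zero]
        unfold Nf
        cases h with
        | zero => simp
        | succ k =>
            rw [if_neg (by omega), Nat.choose_eq_zero_of_lt (show 0 < (0 + (k + 1) + 1) / 2 by omega)]
      · rw [vsum_zero, Xf_zero_of_lt h 0 (by omega)]
        simp [gasc]
      · rw [vsum_zero, Xf_zero_of_lt h 0 (by omega)]
        cases h with
        | zero => simp [gasc, P1f, Mf]
        | succ k => simp [gasc, P1f, Mf]
      · rw [vsum_zero, Xf_zero_of_lt h 0 (by omega)]
        simp [gasc, P1f]
  | succ m ih =>
      obtain ⟨ihN, ih0, ih1, ih2⟩ := ih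
      have min01 : min (0 + 1) 2 = 1 := by norm_num
      have min12 : min (1 + 1) 2 = 2 := by norm_num
      have min22 : min (2 + 1) 2 = 2 := by norm_num
      refine ⟨?_, ?_, ?_, ?_⟩ <;> intro h
      · cases h with
        | zero =>
            rw [Ncnt_succ0, ihN, ihN, Nf_A0]
        | succ k =>
            rw [Ncnt_succ, ihN, ihN, Nf_Ah]
      · cases h with
        | zero =>
            have hrec := W_succ0 0 m
            rw [min01, if_neg (by omega)] at hrec
            simp only [zero_mul, zero_add] at hrec
            have e1 := ih1 1
            have e0 := ih0 0
            have b0 := B0_all m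
            omega
        | succ k =>
            have hrec := W_succ 0 k m
            rw [min01, if_neg (by omega)] at hrec
            simp only [zero_mul, zero_add] at hrec
            have e1 := ih1 (k + 2)
            have e0 := ih0 k
            have bh := Bh_all k m
            omega
      · cases h with
        | zero =>
            have hrec := W_succ0 1 m
            rw [min12, if_pos rfl] at hrec
            simp only [one_mul] at hrec
            have e2 := ih2 1
            have e0 := ih0 0
            have eN := ihN 0
            have b0 := B0_all m
            have hp : P1f 0 (m + 1) = Mf 1 m := rfl
            have hq : Mf 0 (m + 1) = Nf 0 m := rfl
            omega
        | succ k =>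
            have hrec := W_succ 1 k m
            rw [min12, if_pos rfl] at hrec
            simp only [one_mul] at hrec
            have e2 := ih2 (k + 2)
            have e0 := ih0 k
            have eN := ihN k
            have bh := Bh_all k m
            have hp : P1f (k + 1) (m + 1) = Mf (k + 2) m := rfl
            have hq : Mf (k + 1) (m + 1) = Nf k m := rfl
            omega
      · cases h with
        | zero =>
            have hrec := W_succ0 2 m
            rw [min22, if_neg (by omega)] at hrec
            simp only [zero_mul, zero_add] at hrec
            have e2 := ih2 1
            have e0 := ih0 0
            have b0 := B0_all m
            have hp : P1f 0 (m + 1) = Mf 1 m := rfl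
            omega
        | succ k =>
            have hrec := W_succ 2 k m
            rw [min22, if_neg (by omega)] at hrec
            simp only [zero_mul, zero_add] at hrec
            have e2 := ih2 (k + 2)
            have e0 := ih0 k
            have bh := Bh_all k m
            have hp : P1f (k + 1) (m + 1) = Mf (k + 2) m := rfl
            omega

lemma A_eq (m : ℕ) : A m = vsum (gasc 0) 0 m := by
  unfold A DDPs vsum
  rw [Finset.sum_filter]
  apply Finset.sum_congr rfl
  intro v _
  rw [oneAsc_eq_gasc]
  exact if_congr (by unfold IsDDP; exact Iff.rfl) rfl rfl

lemma halfsum (r : ℕ) : 2 * Sf (2 * r) r = 4 ^ r + (2 * r).choose r := by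
  have total : ∑ i ∈ Finset.range (2 * r + 1), (2 * r).choose i = 2 ^ (2 * r) :=
    Nat.sum_range_choose (2 * r)
  have split : ∑ i ∈ Finset.range (2 * r + 1), (2 * r).choose i
      = (∑ i ∈ Finset.range (r + 1), (2 * r).choose i)
        + ∑ i ∈ Finset.Ico (r + 1) (2 * r + 1), (2 * r).choose i := by
    rw [Finset.range_eq_Ico, Finset.range_eq_Ico]
    exact (Finset.sum_Ico_consecutive (fun i => (2 * r).choose i) (m := 0) (n := r + 1) (k := 2 * r + 1) (by omega) (by omega)).symm
  have tail : ∑ i ∈ Finset.Ico (r + 1) (2 * r + 1), (2 * r).choose i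
      = ∑ j ∈ Finset.range r, (2 * r).choose j := by
    rw [Finset.sum_Ico_eq_sum_range]
    rw [show 2 * r + 1 - (r + 1) = r from by omega]
    rw [← Finset.sum_range_reflect (fun j => (2 * r).choose (r + 1 + j)) r]
    apply Finset.sum_congr rfl
    intro j hj
    rw [Finset.mem_range] at hj
    show (2 * r).choose (r + 1 + (r - 1 - j)) = (2 * r).choose j
    rw [show r + 1 + (r - 1 - j) = 2 * r - j from by omega]
    exact Nat.choose_symm (by omega)
  have last : Sf (2 * r) r = (∑ i ∈ Finset.range r, (2 * r).choose i) + (2 * r).choose r := by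
    unfold Sf
    exact Finset.sum_range_succ _ _
  have pow4 : (2 : ℕ) ^ (2 * r) = 4 ^ r := by rw [pow_mul]; norm_num
  have sf_def : Sf (2 * r) r = ∑ i ∈ Finset.range (r + 1), (2 * r).choose i := rfl
  omega


end OneAscAux

/-- For `n ≥ 1`, the total number of 1-ascents in all DDPs of length `n + 2` is
`2^(n-1) + ((n+1)/2) · C(n, ⌊n/2⌋)` (note `(n+1)·C(n,⌊n/2⌋)` is even). -/
theorem oneAscents_closed (n : ℕ) (hn : 1 ≤ n) :
    A (n + 2) = 2 ^ (n - 1) + (n + 1) * n.choose (n / 2) / 2 := by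
  rw [A_eq, (grand (n + 2)).2.1 0]
  rcases Nat.even_or_odd n with ⟨r, rfl⟩ | ⟨r, rfl⟩
  · -- n = r + r, r ≥ 1
    obtain ⟨r', rfl⟩ : ∃ r', r = r' + 1 := ⟨r - 1, by omega⟩
    rw [show r' + 1 + (r' + 1) = 2 * (r' + 1) from by ring]
    have E : Xf 0 (2 * (r' + 1) + 2)
        = (r' + 2) * (2 * (r' + 1)).choose (r' + 2) + Sf (2 * (r' + 1)) (r' + 1) := by
      rw [show 2 * (r' + 1) + 2 = 0 + 2 + 2 * (r' + 1) + 0 from by ring,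
        Xf_eval 0 (r' + 1) 0 (by norm_num)]
      norm_num
    rw [E, show (2 * (r' + 1)) / 2 = r' + 1 from by omega]
    have f1 : (r' + 2) * (2 * (r' + 1)).choose (r' + 2)
        = (r' + 1) * (2 * (r' + 1)).choose (r' + 1) := by
      have h0 := Nat.choose_succ_right_eq (2 * (r' + 1)) (r' + 1)
      rw [show 2 * (r' + 1) - (r' + 1) = r' + 1 from by omega] at h0
      rw [show r' + 2 = r' + 1 + 1 from rfl]
      rw [mul_comm (r' + 1 + 1) _, mul_comm (r' + 1) _]
      exact h0
    have csym : (2 * r' + 1).choose r' = (2 * r' + 1).choose (r' + 1) := by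
      have h0 := Nat.choose_symm (show r' + 1 ≤ 2 * r' + 1 by omega)
      rw [show 2 * r' + 1 - (r' + 1) = r' from by omega] at h0
      exact h0
    have p : (2 * (r' + 1)).choose (r' + 1)
        = (2 * r' + 1).choose r' + (2 * r' + 1).choose (r' + 1) := by
      rw [show 2 * (r' + 1) = (2 * r' + 1) + 1 from by omega]
      exact Nat.choose_succ_succ' (2 * r' + 1) r'
    obtain ⟨c', hc⟩ : ∃ c', (2 * (r' + 1)).choose (r' + 1) = 2 * c' :=
      ⟨(2 * r' + 1).choose (r' + 1), by rw [p, csym]; ring⟩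
    have f2 := halfsum (r' + 1)
    have f4 : (4 : ℕ) ^ (r' + 1) = 2 * 2 ^ (2 * (r' + 1) - 1) := by
      rw [show 2 * (r' + 1) - 1 = 2 * r' + 1 from by omega]
      rw [show (4 : ℕ) = 2 ^ 2 from by norm_num, ← pow_mul]
      rw [show 2 * (r' + 1) = (2 * r' + 1) + 1 from by ring]
      ring
    have hS : Sf (2 * (r' + 1)) (r' + 1) = 2 ^ (2 * (r' + 1) - 1) + c' := by omega
    have hhalf : (2 * (r' + 1) + 1) * (2 * (r' + 1)).choose (r' + 1) / 2
        = (2 * (r' + 1) + 1) * c' := by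
      rw [hc, show (2 * (r' + 1) + 1) * (2 * c') = 2 * ((2 * (r' + 1) + 1) * c') from by ring]
      exact Nat.mul_div_cancel_left _ (by norm_num)
    rw [f1, hS, hhalf, hc]
    ring
  · -- n = 2r+1
    have E : Xf 0 (2 * r + 1 + 2) = (r + 1) * (2 * r + 1).choose (r + 1) + Sf (2 * r + 1) r := by
      rw [show 2 * r + 1 + 2 = 0 + 2 + 2 * r + 1 from by ring, Xf_eval 0 r 1 (by norm_num)]
      rw [show 0 + 2 * r + 1 = 2 * r + 1 from by ring]
    rw [E]
    have d : (2 * r + 1) / 2 = r := by omega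
    rw [d]
    have hs : Sf (2 * r + 1) r = 4 ^ r := by
      unfold Sf
      exact Nat.sum_range_choose_halfway r
    have csym : (2 * r + 1).choose r = (2 * r + 1).choose (r + 1) := by
      have := Nat.choose_symm (show r + 1 ≤ 2 * r + 1 by omega)
      rw [show 2 * r + 1 - (r + 1) = r from by omega] at this
      exact this
    have hpow : (2 : ℕ) ^ (2 * r + 1 - 1) = 4 ^ r := by
      rw [show 2 * r + 1 - 1 = 2 * r from by omega, pow_mul]
      norm_num
    have hhalf : (2 * r + 1 + 1) * (2 * r + 1).choose r / 2 = (r + 1) * (2 * r + 1).choose r := by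
      rw [show (2 * r + 1 + 1) * (2 * r + 1).choose r
          = 2 * ((r + 1) * (2 * r + 1).choose r) from by ring]
      exact Nat.mul_div_cancel_left _ (by norm_num)
    rw [hs, hpow, hhalf, csym]
    ring
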